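/- arXiv:2004.06197 — 2 statements merged into one kernel-verified Lean document; each statement's English description precedes it below -/
import Mathlib

section
/- Let A ⊆ B be k-algebras which are both prime Goldie rings. If LD A = LD B and B is LD-stable (i.e. LD B = GK B), then A is LD-stable (i.e. LD A = GK A). -/
open scoped ENNReal Classical

/-- A subframe of a `k`-algebra `A`: a finite-dimensional subspace containing `1`. -/
def Subframe (k : Type*) [Field k] (A : Type*) [Ring A] [Algebra k A]
    (V : Submodule k A) : Prop :=
  1 ∈ V ∧ FiniteDimensional k V

/-- The volume difference inequality `VDI(A)_d` for a subspace `V` of a `k`-algebra `A`. -/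
def VDI (k : Type*) [Field k] (A : Type*) [Ring A] [Algebra k A]
    (V : Submodule k A) (d : ℝ) : Prop :=
  ∃ c : ℝ, 0 < c ∧ ∀ W : Submodule k A, W ≠ ⊥ → FiniteDimensional k W →
    (Module.finrank k W : ℝ) + c * (Module.finrank k W : ℝ) ^ ((d - 1) / d)
      ≤ (Module.finrank k ↥(V * W) : ℝ)

/-- The lower transcendence degree of a `k`-algebra `A`, as an extended nonnegative real. -/
noncomputable def LD (k : Type*) [Field k] (A : Type*) [Ring A] [Algebra k A] : ℝ≥0∞ :=
  if ∀ V : Submodule k A, Subframe k A V →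
      ∃ W : Submodule k A, W ≠ ⊥ ∧ FiniteDimensional k W ∧
        Module.finrank k ↥(V * W) = Module.finrank k W
  then 0
  else ⨆ (V : Submodule k A) (_ : Subframe k A V),
    sSup {e : ℝ≥0∞ | ∃ d : ℝ, 0 < d ∧ e = ENNReal.ofReal d ∧ VDI k A V d}

/-- The Gelfand–Kirillov dimension of a `k`-algebra `A`. -/
noncomputable def GKdim (k : Type*) [Field k] (A : Type*) [Ring A] [Algebra k A] : ℝ≥0∞ :=
  ⨆ (V : Submodule k A) (_ : Subframe k A V),
    Filter.limsup
      (fun n : ℕ =>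
        ENNReal.ofReal (Real.log (Module.finrank k ↥(V ^ n)) / Real.log n))
      Filter.atTop

/-- A `k`-algebra is `LD`-stable if its lower transcendence degree equals its
Gelfand–Kirillov dimension. -/
def LDStable (k : Type*) [Field k] (A : Type*) [Ring A] [Algebra k A] : Prop :=
  LD k A = GKdim k A

/-- A prime ring: `a R b = 0` implies `a = 0` or `b = 0`. -/
def IsPrimeRing' (R : Type*) [Ring R] : Prop :=
  ∀ a b : R, (∀ r : R, a * r * b = 0) → a = 0 ∨ b = 0

/-- Finite uniform (Goldie) dimension: `R` contains no infinite independent family of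
nonzero right ideals. -/
def HasFiniteUniformDimension (R : Type*) [Ring R] : Prop :=
  ¬ ∃ f : ℕ → Submodule Rᵐᵒᵖ R,
      (∀ n, f n ≠ ⊥) ∧ (∀ n, f n ⊓ (⨆ (m : ℕ) (_ : m ≠ n), f m) = ⊥)

/-- The right annihilator of a subset of a ring. -/
def RightAnn (R : Type*) [Ring R] (S : Set R) : Set R :=
  {x : R | ∀ a ∈ S, a * x = 0}

/-- The ascending chain condition on right annihilators. -/
def ACCRightAnnihilators (R : Type*) [Ring R] : Prop :=
  ∀ f : ℕ → Set R, (∀ n, ∃ S : Set R, f n = RightAnn R S) →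
    (∀ n, f n ⊆ f (n + 1)) → ∃ N, ∀ n, N ≤ n → f n = f N

/-- A prime (right) Goldie ring: a prime ring with finite uniform dimension and the
ascending chain condition on right annihilators. -/
def IsPrimeGoldie (R : Type*) [Ring R] : Prop :=
  IsPrimeRing' R ∧ HasFiniteUniformDimension R ∧ ACCRightAnnihilators R

/-- An Ore domain: a domain in which the nonzero elements form a left and right Ore set. -/
def IsOreDomain (A : Type*) [Ring A] : Prop :=
  IsDomain A ∧
  (∀ (a s : A), s ≠ 0 → ∃ b t : A, t ≠ 0 ∧ a * t = s * b) ∧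
  (∀ (a s : A), s ≠ 0 → ∃ b t : A, t ≠ 0 ∧ t * a = b * s)

section Aux

variable {k : Type*} [Field k]

lemma aux_bernoulli_step {d : ℝ} (hd : 1 < d) (n : ℕ) (hn : 1 ≤ n) :
    ((n : ℝ) + 1) ^ d ≤ (n : ℝ) ^ d + d * ((n : ℝ) + 1) ^ (d - 1) := by
  have hn1 : (1 : ℝ) ≤ (n : ℝ) := by exact_mod_cast hn
  have hnp : (0 : ℝ) < (n : ℝ) := by linarith
  have hb : (0 : ℝ) < (n : ℝ) + 1 := by linarith
  have hs : (-1 : ℝ) ≤ -(1 / ((n : ℝ) + 1)) := by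
    rw [neg_le_neg_iff, div_le_one hb]; linarith
  have hber := one_add_mul_self_le_rpow_one_add hs hd.le
  have h1s : (1 : ℝ) + -(1 / ((n : ℝ) + 1)) = (n : ℝ) / ((n : ℝ) + 1) := by
    field_simp
    ring
  rw [h1s, Real.div_rpow hnp.le hb.le] at hber
  have hRpos : (0 : ℝ) < ((n : ℝ) + 1) ^ d := Real.rpow_pos_of_pos hb d
  have hS : ((n : ℝ) + 1) ^ (d - 1) = ((n : ℝ) + 1) ^ d / ((n : ℝ) + 1) := by
    rw [Real.rpow_sub hb, Real.rpow_one]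
  rw [hS]
  have h2 := mul_le_mul_of_nonneg_right hber hRpos.le
  rw [div_mul_cancel₀ _ (ne_of_gt hRpos)] at h2
  have hexp : (1 + d * -(1 / ((n:ℝ) + 1))) * ((n:ℝ)+1) ^ d
      = ((n:ℝ)+1)^d - d * (((n:ℝ)+1)^d / ((n:ℝ)+1)) := by
    field_simp; ring
  rw [hexp] at h2
  linarith

lemma aux_growth {c d : ℝ} (hc : 0 < c) (hd : 1 < d) (f : ℕ → ℝ)
    (hf1 : ∀ n, 1 ≤ f n)
    (hstep : ∀ n, f n + c * f n ^ ((d - 1) / d) ≤ f (n + 1)) :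
    ∀ n : ℕ, 1 ≤ n → (min 1 (c / (d * 2 ^ (d - 1))) * n) ^ d ≤ f n := by
  set ε := min 1 (c / (d * (2 : ℝ) ^ (d - 1))) with hεdef
  have hdpos : (0 : ℝ) < d := by linarith
  have h2pos : (0 : ℝ) < (2 : ℝ) ^ (d - 1) := Real.rpow_pos_of_pos two_pos _
  have hε : 0 < ε := lt_min one_pos (div_pos hc (by positivity))
  have hε1 : ε ≤ 1 := min_le_left _ _
  have hεc : ε * (d * 2 ^ (d - 1)) ≤ c := by
    have hm := min_le_right 1 (c / (d * (2 : ℝ) ^ (d - 1)))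
    calc ε * (d * 2 ^ (d-1)) ≤ (c / (d * (2:ℝ) ^ (d-1))) * (d * 2 ^ (d-1)) :=
          mul_le_mul_of_nonneg_right hm (by positivity)
      _ = c := div_mul_cancel₀ c (by positivity)
  intro n hn
  induction n, hn using Nat.le_induction with
  | base =>
      have h : (ε * ((1:ℕ) : ℝ)) ^ d ≤ 1 := by
        push_cast
        rw [mul_one]
        exact Real.rpow_le_one hε.le hε1 hdpos.le
      exact h.trans (hf1 1)
  | succ n hn ih =>
      have hn1 : (1 : ℝ) ≤ (n : ℝ) := by exact_mod_cast hn
      have hnp : (0 : ℝ) < (n : ℝ) := by linarith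
      have hb : (0 : ℝ) < (n : ℝ) + 1 := by linarith
      have hεn : (0 : ℝ) < ε * n := by positivity
      have hp0 : 0 ≤ (d - 1) / d := div_nonneg (by linarith) hdpos.le
      have hmono : (ε * n) ^ d + c * ((ε * n) ^ d) ^ ((d - 1) / d)
          ≤ f n + c * f n ^ ((d - 1) / d) := by
        have h1 : ((ε * n) ^ d) ^ ((d-1)/d) ≤ f n ^ ((d-1)/d) :=
          Real.rpow_le_rpow (by positivity) ih hp0
        nlinarith [hc.le]
      have hcollapse : ((ε * n) ^ d) ^ ((d - 1) / d) = (ε * n) ^ (d - 1) := by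
        rw [← Real.rpow_mul hεn.le]
        congr 1
        field_simp
      rw [hcollapse] at hmono
      have hEsplit : ε ^ d = ε * ε ^ (d - 1) := by
        nth_rewrite 2 [show ε = ε ^ (1:ℝ) from (Real.rpow_one ε).symm]
        rw [← Real.rpow_add hε]
        congr 1; ring
      have hmul1 : (ε * ((n:ℝ) + 1)) ^ d = ε ^ d * ((n:ℝ) + 1) ^ d :=
        Real.mul_rpow hε.le hb.le
      have hmul2 : (ε * (n:ℝ)) ^ d = ε ^ d * (n:ℝ) ^ d :=
        Real.mul_rpow hε.le hnp.le
      have hmul3 : (ε * (n:ℝ)) ^ (d-1) = ε ^ (d-1) * (n:ℝ) ^ (d-1) :=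
        Real.mul_rpow hε.le hnp.le
      have h1 := aux_bernoulli_step hd n hn
      have h2 : ((n:ℝ) + 1) ^ (d - 1) ≤ 2 ^ (d-1) * (n:ℝ) ^ (d - 1) := by
        rw [← Real.mul_rpow (by norm_num) hnp.le]
        exact Real.rpow_le_rpow hb.le (by linarith) (by linarith)
      have hkey : (ε * ((n:ℝ) + 1)) ^ d ≤ (ε * (n:ℝ)) ^ d + c * (ε * (n:ℝ)) ^ (d - 1) := by
        rw [hmul1, hmul2, hmul3, hEsplit]
        have hF : (0:ℝ) ≤ ε ^ (d-1) := (Real.rpow_pos_of_pos hε (d-1)).le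
        have hQ : (0:ℝ) ≤ (n:ℝ) ^ (d-1) := (Real.rpow_pos_of_pos hnp (d-1)).le
        have hS : (0:ℝ) ≤ ((n:ℝ)+1) ^ (d-1) := (Real.rpow_pos_of_pos hb (d-1)).le
        have hEF : (0:ℝ) ≤ ε * ε ^ (d-1) := mul_nonneg hε.le hF
        nlinarith [mul_le_mul_of_nonneg_left h1 hEF,
          mul_le_mul_of_nonneg_left h2 (mul_nonneg hEF hdpos.le),
          mul_le_mul_of_nonneg_right hεc (mul_nonneg hF hQ)]
      calc (ε * ((n:ℕ)+1 : ℕ)) ^ d = (ε * ((n:ℝ)+1)) ^ d := by push_cast; ring_nf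
        _ ≤ (ε * (n:ℝ)) ^ d + c * (ε * (n:ℝ)) ^ (d - 1) := hkey
        _ ≤ f n + c * f n ^ ((d-1)/d) := hmono
        _ ≤ f (n+1) := hstep n

lemma aux_pow_fd {A : Type*} [Ring A] [Algebra k A] (V : Submodule k A)
    (h : FiniteDimensional k ↥V) (n : ℕ) : FiniteDimensional k ↥(V ^ n) :=
  (Submodule.fg_iff_finiteDimensional _).mp
    (Submodule.FG.pow ((Submodule.fg_iff_finiteDimensional _).mpr h) n)

lemma aux_one_mem_pow {A : Type*} [Ring A] [Algebra k A] (V : Submodule k A)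
    (h : 1 ∈ V) (n : ℕ) : (1 : A) ∈ V ^ n := by
  induction n with
  | zero =>
      rw [pow_zero]
      exact Submodule.one_le.mp le_rfl
  | succ n ih => rw [pow_succ]; simpa using Submodule.mul_mem_mul ih h

lemma aux_pow_finrank_pos {A : Type*} [Ring A] [Algebra k A] [Nontrivial A]
    (V : Submodule k A) (hfd : FiniteDimensional k ↥V) (h : 1 ∈ V) (n : ℕ) :
    0 < Module.finrank k ↥(V ^ n) := by
  have := aux_pow_fd V hfd n
  have h2 : V ^ n ≠ ⊥ := by
    intro hbot
    have h1 : (1 : A) ∈ (⊥ : Submodule k A) := hbot ▸ aux_one_mem_pow V h n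
    rw [Submodule.mem_bot] at h1
    exact one_ne_zero h1
  rw [Nat.pos_iff_ne_zero]
  intro h0
  exact h2 (Submodule.finrank_eq_zero.mp h0)

lemma aux_le_GK {A : Type*} [Ring A] [Algebra k A] (V : Submodule k A)
    (hV : Subframe k A V) (x : ℝ≥0∞)
    (h : ∀ᶠ n : ℕ in Filter.atTop,
      x ≤ ENNReal.ofReal (Real.log (Module.finrank k ↥(V ^ n)) / Real.log n)) :
    x ≤ GKdim k A :=
  le_trans (Filter.le_limsup_of_frequently_le' h.frequently)
    (le_iSup_of_le V (le_iSup_of_le hV le_rfl))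

lemma aux_vdi_le_GK {A : Type*} [Ring A] [Algebra k A] [Nontrivial A]
    (V : Submodule k A) (hV : Subframe k A V) {d : ℝ} (hd : 0 < d)
    (hvdi : VDI k A V d) : ENNReal.ofReal d ≤ GKdim k A := by
  obtain ⟨c, hc, hW⟩ := hvdi
  set N : ℕ → ℕ := fun n => Module.finrank k ↥(V ^ n) with hN
  have hNpos : ∀ n, 0 < N n := aux_pow_finrank_pos V hV.2 hV.1
  have hstep : ∀ n, (N n : ℝ) + c * (N n : ℝ) ^ ((d - 1) / d) ≤ (N (n + 1) : ℝ) := by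
    intro n
    have := hW (V ^ n) (by
        intro hbot
        have h1 : (1 : A) ∈ (⊥ : Submodule k A) := hbot ▸ aux_one_mem_pow V hV.1 n
        rw [Submodule.mem_bot] at h1
        exact one_ne_zero h1) (aux_pow_fd V hV.2 n)
    rwa [← pow_succ' V n] at this
  have hf1 : ∀ n, (1 : ℝ) ≤ (N n : ℝ) := fun n => by exact_mod_cast hNpos n
  by_cases hd1 : d ≤ 1
  · -- linear growth suffices
    have hlin : ∀ n, n + 1 ≤ N n := by
      intro n
      induction n with
      | zero => exact hNpos 0
      | succ n ih =>
          have hlt : (N n : ℝ) < (N (n + 1) : ℝ) := by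
            have hpow : (0:ℝ) < c * (N n : ℝ) ^ ((d-1)/d) :=
              mul_pos hc (Real.rpow_pos_of_pos (by exact_mod_cast hNpos n) _)
            linarith [hstep n]
          have : N n < N (n + 1) := by exact_mod_cast hlt
          omega
    refine aux_le_GK V hV _ ?_
    filter_upwards [Filter.eventually_ge_atTop 2] with n hn
    have hn1 : (1:ℝ) < (n:ℝ) := by exact_mod_cast hn
    have hlogn : 0 < Real.log n := Real.log_pos hn1
    have hlogf : Real.log n ≤ Real.log (N n) := by
      apply Real.log_le_log (by linarith)
      have : (n:ℝ) + 1 ≤ (N n : ℝ) := by exact_mod_cast hlin n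
      linarith
    have hratio : (1:ℝ) ≤ Real.log (N n) / Real.log n :=
      (one_le_div hlogn).mpr hlogf
    exact ENNReal.ofReal_le_ofReal (by linarith)
  · push_neg at hd1
    set ε := min 1 (c / (d * (2:ℝ) ^ (d - 1))) with hεdef
    have hdpos : (0:ℝ) < d := hd
    have hε : 0 < ε := lt_min one_pos (div_pos hc (by positivity))
    have hg := aux_growth hc hd1 (fun n => (N n : ℝ)) hf1 hstep
    refine le_of_forall_lt fun x hx => ?_
    have hxt : x ≠ ⊤ := (hx.trans_le le_top).ne_top
    have hxt' : x ≠ ⊤ := hxt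
    have hxR : x.toReal < d := (ENNReal.lt_ofReal_iff_toReal_lt hxt).mp hx
    set d' := (x.toReal + d) / 2 with hd'
    have hd'pos : 0 < d' := by
      have := ENNReal.toReal_nonneg (a := x)
      rw [hd']; linarith
    have hxd' : x.toReal < d' := by rw [hd']; linarith
    have hd'd : d' < d := by rw [hd']; linarith
    have hxlt : x < ENNReal.ofReal d' := by
      conv_lhs => rw [← ENNReal.ofReal_toReal hxt]
      exact (ENNReal.ofReal_lt_ofReal_iff hd'pos).mpr hxd'
    refine hxlt.trans_le ?_
    refine aux_le_GK V hV _ ?_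
    have htend : Filter.Tendsto (fun n : ℕ => d + d * Real.log ε / Real.log n)
        Filter.atTop (nhds d) := by
      have h0 : Filter.Tendsto (fun n : ℕ => d * Real.log ε / Real.log n)
          Filter.atTop (nhds 0) :=
        Filter.Tendsto.div_atTop tendsto_const_nhds
          (Real.tendsto_log_atTop.comp tendsto_natCast_atTop_atTop)
      simpa using tendsto_const_nhds.add h0
    filter_upwards [htend.eventually (eventually_gt_nhds hd'd),
      Filter.eventually_ge_atTop 2] with n hlt hn
    have hn1 : (1:ℝ) < (n:ℝ) := by exact_mod_cast hn
    have hnp : (0:ℝ) < (n:ℝ) := by linarith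
    have hlogn : 0 < Real.log n := Real.log_pos hn1
    have hεn : (0:ℝ) < ε * n := by positivity
    have hfn : (ε * n) ^ d ≤ (N n : ℝ) := hg n (by omega)
    have hlogf : d * (Real.log ε + Real.log (n:ℝ)) ≤ Real.log (N n) := by
      have h1 : Real.log ((ε * n) ^ d) = d * (Real.log ε + Real.log (n:ℝ)) := by
        rw [Real.log_rpow hεn, Real.log_mul (ne_of_gt hε) (ne_of_gt hnp)]
      rw [← h1]
      exact Real.log_le_log (Real.rpow_pos_of_pos hεn d) hfn
    have heq : d + d * Real.log ε / Real.log n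
        = d * (Real.log ε + Real.log (n:ℝ)) / Real.log n := by
      field_simp
      ring
    have hratio : d' ≤ Real.log (N n) / Real.log n := by
      have h2 : d * (Real.log ε + Real.log (n:ℝ)) / Real.log n
          ≤ Real.log (N n) / Real.log n :=
        div_le_div_of_nonneg_right hlogf hlogn.le
      calc d' ≤ d + d * Real.log ε / Real.log n := hlt.le
        _ = _ := heq
        _ ≤ _ := h2
    exact ENNReal.ofReal_le_ofReal hratio

lemma aux_LD_le_GK (A : Type*) [Ring A] [Algebra k A] [Nontrivial A] :
    LD k A ≤ GKdim k A := by
  rw [LD]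
  split
  · exact zero_le
  · refine iSup₂_le fun V hV => sSup_le fun e he => ?_
    obtain ⟨d, hd, rfl, hvdi⟩ := he
    exact aux_vdi_le_GK V hV hd hvdi

end Aux

section Aux2

variable {k : Type*} [Field k] {B : Type*} [Ring B] [Algebra k B]

lemma aux_finrank_map (A : Subalgebra k B) (V : Submodule k ↥A) :
    Module.finrank k ↥(V.map A.val.toLinearMap) = Module.finrank k ↥V :=
  (LinearEquiv.finrank_eq
    (Submodule.equivMapOfInjective A.val.toLinearMap Subtype.val_injective V)).symm

lemma aux_GK_mono (A : Subalgebra k B) : GKdim k ↥A ≤ GKdim k B := by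
  refine iSup₂_le fun V hV => ?_
  refine le_trans ?_ (le_iSup_of_le (V.map A.val.toLinearMap)
    (le_iSup_of_le ?_ le_rfl))
  · apply le_of_eq
    congr 1
    funext n
    rw [← Submodule.map_pow, aux_finrank_map]
  · constructor
    · have h1 : A.val (1 : ↥A) ∈ V.map A.val.toLinearMap :=
        Submodule.mem_map_of_mem hV.1
      simpa using h1
    · haveI := hV.2
      exact LinearEquiv.finiteDimensional
        (Submodule.equivMapOfInjective A.val.toLinearMap Subtype.val_injective V)

lemma aux_not_LDStable_of_subsingleton (C : Type*) [Ring C] [Algebra k C]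
    (h : Subsingleton C) : ¬ LDStable k C := by
  have hbot : ∀ W : Submodule k C, W = ⊥ := by
    intro W
    ext x
    simp [Subsingleton.elim x 0]
  have hGK : GKdim k C = 0 := by
    refine le_antisymm (iSup₂_le fun V _ => ?_) zero_le
    have heq : (fun n : ℕ =>
        ENNReal.ofReal (Real.log (Module.finrank k ↥(V ^ n)) / Real.log n))
        = fun _ : ℕ => (0 : ℝ≥0∞) := by
      funext n
      have : (V ^ n) = ⊥ := hbot _
      rw [this, finrank_bot]
      simp
    rw [heq, Filter.limsup_const]
  have hsub : Subframe k C (⊥ : Submodule k C) := by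
    constructor
    · rw [Submodule.mem_bot]
      exact Subsingleton.elim _ _
    · infer_instance
  have hcond : ¬ ∀ V : Submodule k C, Subframe k C V →
      ∃ W : Submodule k C, W ≠ ⊥ ∧ FiniteDimensional k W ∧
        Module.finrank k ↥(V * W) = Module.finrank k W := by
    intro hall
    obtain ⟨W, hW, _, _⟩ := hall ⊥ hsub
    exact hW (hbot W)
  have hLD : (1 : ℝ≥0∞) ≤ LD k C := by
    rw [LD, if_neg hcond]
    refine le_trans ?_ (le_iSup_of_le ⊥ (le_iSup_of_le hsub le_rfl))
    refine le_sSup ?_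
    refine ⟨1, one_pos, by simp, 1, one_pos, fun W hW _ => absurd (hbot W) hW⟩
  intro hst
  rw [LDStable, hGK] at hst
  rw [hst] at hLD
  simp at hLD

end Aux2

/-- Let `A ⊆ B` be `k`-algebras which are both prime Goldie rings.
If `LD A = LD B` and `B` is `LD`-stable, then `A` is `LD`-stable. -/
theorem stmt_0 (k : Type*) [Field k] [CharZero k]
    (B : Type*) [Ring B] [Algebra k B] (A : Subalgebra k B)
    (hA : IsPrimeGoldie A) (hB : IsPrimeGoldie B)
    (hLD : LD k A = LD k B) (hstable : LDStable k B) :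
    LDStable k A := by
  by_cases hns : Subsingleton B
  · exact absurd hstable (aux_not_LDStable_of_subsingleton B hns)
  · have hnt : Nontrivial B := not_subsingleton_iff_nontrivial.mp hns
    have hntA : Nontrivial ↥A := ⟨1, 0, by
      intro h
      exact one_ne_zero (congrArg Subtype.val h)⟩
    have h1 : LD k ↥A ≤ GKdim k ↥A := aux_LD_le_GK ↥A
    have h2 : GKdim k ↥A ≤ LD k ↥A := by
      rw [hLD, hstable]
      exact aux_GK_mono A
    exact le_antisymm h1 h2
end

section
/- Let R and S be prime rings. Then any Morita context (R, S, V, W, θ, ψ) implementing a Morita equivalence between R and S (i.e. with θ : V ⊗_S W → R and ψ : W ⊗_R V → S surjective) is a prime context. -/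
/-- A Morita context between rings `R` and `S`: an `(R,S)`-bimodule `V`, an
`(S,R)`-bimodule `W`, and balanced biadditive pairings `θ : V ⊗_S W → R`,
`ψ : W ⊗_R V → S` satisfying the associativity conditions
`θ(v⊗w)·v' = v·ψ(w⊗v')` and `ψ(w⊗v)·w' = w·θ(v⊗w')`.
Right module structures are encoded as modules over the opposite rings. -/
structure MoritaContextData (R S : Type*) [Ring R] [Ring S] where
  V : Type*
  W : Type*
  [addV : AddCommGroup V]
  [addW : AddCommGroup W]
  [modRV : Module R V]
  [modSV : Module Sᵐᵒᵖ V]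
  [commV : SMulCommClass R Sᵐᵒᵖ V]
  [modSW : Module S W]
  [modRW : Module Rᵐᵒᵖ W]
  [commW : SMulCommClass S Rᵐᵒᵖ W]
  θ : V →+ W →+ R
  ψ : W →+ V →+ S
  θ_smul_left : ∀ (r : R) (v : V) (w : W), θ (r • v) w = r * θ v w
  θ_smul_right : ∀ (v : V) (w : W) (r : R), θ v (MulOpposite.op r • w) = θ v w * r
  θ_balanced : ∀ (v : V) (s : S) (w : W), θ (MulOpposite.op s • v) w = θ v (s • w)
  ψ_smul_left : ∀ (s : S) (w : W) (v : V), ψ (s • w) v = s * ψ w v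
  ψ_smul_right : ∀ (w : W) (v : V) (s : S), ψ w (MulOpposite.op s • v) = ψ w v * s
  ψ_balanced : ∀ (w : W) (r : R) (v : V), ψ (MulOpposite.op r • w) v = ψ w (r • v)
  assoc₁ : ∀ (v : V) (w : W) (v' : V), θ v w • v' = MulOpposite.op (ψ w v') • v
  assoc₂ : ∀ (w : W) (v : V) (w' : W), ψ w v • w' = MulOpposite.op (θ v w') • w

attribute [instance] MoritaContextData.addV MoritaContextData.addW
  MoritaContextData.modRV MoritaContextData.modSV MoritaContextData.commV
  MoritaContextData.modSW MoritaContextData.modRW MoritaContextData.commW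

/-- A Morita context is a prime context if `R` and `S` are prime rings and
`θ(v ⊗ W) ≠ 0`, `θ(V ⊗ w) ≠ 0` and `θ(V·s ⊗ W) ≠ 0` for all nonzero `v ∈ V`,
`w ∈ W`, `s ∈ S`. -/
def MoritaContextData.IsPrimeContext {R S : Type*} [Ring R] [Ring S]
    (c : MoritaContextData R S) : Prop :=
  IsPrimeRing' R ∧ IsPrimeRing' S ∧
  (∀ v : c.V, v ≠ 0 → ∃ w : c.W, c.θ v w ≠ 0) ∧
  (∀ w : c.W, w ≠ 0 → ∃ v : c.V, c.θ v w ≠ 0) ∧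
  (∀ s : S, s ≠ 0 → ∃ (v : c.V) (w : c.W), c.θ (MulOpposite.op s • v) w ≠ 0)

/-- let `R` and `S` be prime rings.  Then any Morita context between `R`
and `S` implementing a Morita equivalence (i.e. with both pairings `θ` and `ψ`
surjective) is a prime context. -/
theorem stmt_10 (R S : Type*) [Ring R] [Ring S]
    (hR : IsPrimeRing' R) (hS : IsPrimeRing' S)
    (c : MoritaContextData R S)
    (hθ : ∀ r : R, r ∈ AddSubgroup.closure {x : R | ∃ (v : c.V) (w : c.W), x = c.θ v w})
    (hψ : ∀ s : S, s ∈ AddSubgroup.closure {x : S | ∃ (w : c.W) (v : c.V), x = c.ψ w v}) :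
    c.IsPrimeContext := by
  refine ⟨hR, hS, ?_, ?_, ?_⟩
  · -- θ(v ⊗ W) ≠ 0 for v ≠ 0
    intro v hv
    by_contra h
    push_neg at h
    apply hv
    have key : ∀ s : S, s ∈ AddSubgroup.closure
        {x : S | ∃ (w : c.W) (v : c.V), x = c.ψ w v} → MulOpposite.op s • v = 0 := by
      intro s hs
      induction hs using AddSubgroup.closure_induction with
      | mem x hx =>
        obtain ⟨w, v', rfl⟩ := hx
        rw [← c.assoc₁ v w v', h w, zero_smul]
      | zero => simp
      | add x y hx hy px py =>
        rw [MulOpposite.op_add, add_smul, px, py, add_zero]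
      | neg x hx px =>
        rw [MulOpposite.op_neg, neg_smul, px, neg_zero]
    have := key 1 (hψ 1)
    simpa using this
  · -- θ(V ⊗ w) ≠ 0 for w ≠ 0
    intro w hw
    by_contra h
    push_neg at h
    apply hw
    have key : ∀ s : S, s ∈ AddSubgroup.closure
        {x : S | ∃ (w : c.W) (v : c.V), x = c.ψ w v} → s • w = 0 := by
      intro s hs
      induction hs using AddSubgroup.closure_induction with
      | mem x hx =>
        obtain ⟨w', v, rfl⟩ := hx
        rw [c.assoc₂ w' v w, h v, MulOpposite.op_zero, zero_smul]
      | zero => simp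
      | add x y hx hy px py => rw [add_smul, px, py, add_zero]
      | neg x hx px => rw [neg_smul, px, neg_zero]
    have := key 1 (hψ 1)
    simpa using this
  · -- θ(V·s ⊗ W) ≠ 0 for s ≠ 0
    intro s hs
    by_contra h
    push_neg at h
    apply hs
    -- h : ∀ v w, c.θ (op s • v) w = 0, i.e. θ v (s • w) = 0
    have h' : ∀ (v : c.V) (w : c.W), c.θ v (s • w) = 0 := by
      intro v w
      rw [← c.θ_balanced]; exact h v w
    -- step A: op (ψ (s•w) v) • v' = 0
    have hA : ∀ (w : c.W) (v v' : c.V),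
        MulOpposite.op (c.ψ (s • w) v) • v' = 0 := by
      intro w v v'
      rw [← c.assoc₁ v' (s • w) v, h', zero_smul]
    -- step B: ψ (s•w) v = 0
    have hB : ∀ (w : c.W) (v : c.V), c.ψ (s • w) v = 0 := by
      intro w v
      have key : ∀ t : S, t ∈ AddSubgroup.closure
          {x : S | ∃ (w : c.W) (v : c.V), x = c.ψ w v} → t * c.ψ (s • w) v = 0 := by
        intro t ht
        induction ht using AddSubgroup.closure_induction with
        | mem x hx =>
          obtain ⟨w', v', rfl⟩ := hx
          rw [← c.ψ_smul_right w' v' (c.ψ (s • w) v), hA, map_zero]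
        | zero => simp
        | add x y hx hy px py => rw [add_mul, px, py, add_zero]
        | neg x hx px => rw [neg_mul, px, neg_zero]
      have := key 1 (hψ 1)
      simpa using this
    -- conclude s = 0
    have key : ∀ t : S, t ∈ AddSubgroup.closure
        {x : S | ∃ (w : c.W) (v : c.V), x = c.ψ w v} → s * t = 0 := by
      intro t ht
      induction ht using AddSubgroup.closure_induction with
      | mem x hx =>
        obtain ⟨w, v, rfl⟩ := hx
        rw [← c.ψ_smul_left s w v]; exact hB w v
      | zero => simp
      | add x y hx hy px py => rw [mul_add, px, py, add_zero]
      | neg x hx px => rw [mul_neg, px, neg_zero]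
    have := key 1 (hψ 1)
    simpa using this
end
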